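/- Assume g(m) ≠ 0 for every integer m. Then for all ℓ, k ∈ ℕ one has |ℓ,k⟩ = Σ_{n=0}^k (η^n / n!) · ∏_{j=1}^n [f^(1)_{ℓ+j−1} e_{k−j+1} / g((k−n)−(ℓ+n)+j)] · v_{ℓ+n, k−n}, where v_{ℓ,k} := Σ_{n=0}^k M^{k,ℓ}_n |ℓ+n, k−n⟩. In other words, this formula inverts the change of basis |ℓ,k⟩ ↦ v_{ℓ,k}. -/

import Mathlib

open Finset

/-- Reindexing a triangular double sum. -/
lemma sum_triangle {M : Type*} [AddCommMonoid M] (k : ℕ) (f : ℕ → ℕ → M) :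
    ∑ n ∈ range (k+1), ∑ m ∈ range (k - n + 1), f n m
      = ∑ s ∈ range (k+1), ∑ n ∈ range (s+1), f n (s - n) := by
  induction k with
  | zero => simp
  | succ k ih =>
    rw [sum_range_succ (fun s => ∑ n ∈ range (s+1), f n (s-n)) (k+1), ← ih,
        sum_range_succ (fun n => ∑ m ∈ range (k + 1 - n + 1), f n m) (k+1)]
    have h1 : ∀ n ∈ range (k+1), ∑ m ∈ range (k + 1 - n + 1), f n m
        = (∑ m ∈ range (k - n + 1), f n m) + f n (k + 1 - n) := by
      intro n hn
      rw [mem_range] at hn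
      have : k + 1 - n + 1 = (k - n + 1) + 1 := by omega
      rw [this, sum_range_succ]
      congr 2
      omega
    rw [sum_congr rfl h1, sum_add_distrib]
    have h2 : ∑ n ∈ range (k+1+1), f n (k+1-n)
        = (∑ n ∈ range (k+1), f n (k+1-n)) + f (k+1) 0 := by
      rw [sum_range_succ, Nat.sub_self]
    rw [h2]
    simp [add_assoc]

/-- The key telescoping identity. -/
lemma key_telescope (eta : ℂ) (W : ℕ → ℂ) (hW : ∀ i, W i ≠ 0)
    (haff : ∀ i, W (i+1) = W i - eta) (s : ℕ) (hs : 1 ≤ s) :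
    ∑ n ∈ range (s+1),
      ((-1 : ℂ))^n * (s.choose n : ℂ) * W (2*n) / ∏ i ∈ range (s+1), W (n+i) = 0 := by
  set T : ℕ → ℂ := fun n => ∏ i ∈ range s, W (n+i) with hTdef
  have hTne : ∀ n, T n ≠ 0 := fun n => prod_ne_zero_iff.mpr fun i _ => hW _
  have hPT1 : ∀ n, ∏ i ∈ range (s+1), W (n+i) = W n * T (n+1) := by
    intro n
    rw [prod_range_succ']
    simp only [hTdef, add_zero]
    rw [mul_comm]
    congr 1
    apply prod_congr rfl
    intro i _
    congr 1
    omega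
  have hPT2 : ∀ n, ∏ i ∈ range (s+1), W (n+i) = T n * W (n+s) := by
    intro n; rw [prod_range_succ]
  have hWlin : ∀ n m : ℕ, W (n + m) = W n - (m : ℂ) * eta := by
    intro n m
    induction m with
    | zero => simp
    | succ m ih => rw [← add_assoc, haff, ih]; push_cast; ring
  have hterm : ∀ n ∈ range (s+1),
      (s : ℂ) * (((-1 : ℂ))^n * (s.choose n : ℂ) * W (2*n) / ∏ i ∈ range (s+1), W (n+i))
        = ((-1 : ℂ))^n * (((s - n) * s.choose n : ℕ) : ℂ) / T (n+1)
          + ((-1 : ℂ))^n * ((n * s.choose n : ℕ) : ℂ) / T n := by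
    intro n hn
    rw [mem_range] at hn
    have hn' : n ≤ s := by omega
    have hw : (s : ℂ) * W (2*n) = ((s : ℂ) - n) * W n + (n : ℂ) * W (n+s) := by
      rw [show 2*n = n+n from by ring, hWlin, hWlin]
      ring
    have h01 : W n * T (n+1) = T n * W (n+s) := by rw [← hPT1, hPT2]
    have hc : (((s - n) * s.choose n : ℕ) : ℂ) = ((s : ℂ) - n) * (s.choose n : ℂ) := by
      push_cast [Nat.cast_sub hn']; ring
    rw [hc, hPT1 n, mul_div_assoc', div_add_div _ _ (hTne (n+1)) (hTne n),
      div_eq_div_iff (mul_ne_zero (hW n) (hTne (n+1))) (mul_ne_zero (hTne (n+1)) (hTne n))]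
    push_cast
    linear_combination (((-1:ℂ))^n * (s.choose n : ℂ) * T n * T (n+1)) * hw
      - (((-1:ℂ))^n * (s.choose n : ℂ) * (n : ℂ) * T (n+1)) * h01
  have hsum : (s : ℂ) * (∑ n ∈ range (s+1),
      ((-1 : ℂ))^n * (s.choose n : ℂ) * W (2*n) / ∏ i ∈ range (s+1), W (n+i)) = 0 := by
    rw [mul_sum, sum_congr rfl hterm, sum_add_distrib]
    set F : ℕ → ℂ := fun n => ((-1 : ℂ))^n * ((n * s.choose n : ℕ) : ℂ) / T n with hF
    have hfirst : ∀ n ∈ range (s+1),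
        ((-1 : ℂ))^n * (((s - n) * s.choose n : ℕ) : ℂ) / T (n+1) = - F (n+1) := by
      intro n _
      have h : (s - n) * s.choose n = (n+1) * s.choose (n+1) := by
        rw [mul_comm (s-n), mul_comm (n+1), Nat.choose_succ_right_eq]
      rw [h, hF]
      simp only [pow_succ]
      ring
    rw [sum_congr rfl hfirst]
    have hF0 : F 0 = 0 := by simp [hF]
    have hFs : F (s+1) = 0 := by
      simp [hF, Nat.choose_eq_zero_of_lt (Nat.lt_succ_self s)]
    have hshift : ∑ n ∈ range (s+1), F (n+1) = ∑ n ∈ range (s+1), F n := by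
      have e1 : ∑ n ∈ range (s+1+1), F n = (∑ n ∈ range (s+1), F (n+1)) + F 0 :=
        sum_range_succ' F (s+1)
      have e2 : ∑ n ∈ range (s+1+1), F n = (∑ n ∈ range (s+1), F n) + F (s+1) :=
        sum_range_succ F (s+1)
      have e3 := e1.symm.trans e2
      rw [hF0, hFs, add_zero, add_zero] at e3
      exact e3
    rw [sum_neg_distrib, hshift]
    ring
  have hsne : (s : ℂ) ≠ 0 := Nat.cast_ne_zero.mpr (by omega)
  exact (mul_eq_zero.mp hsum).resolve_left hsne

lemma prodIcc (m : ℕ) (f : ℕ → ℂ) : ∏ j ∈ Icc 1 m, f j = ∏ i ∈ range m, f (1+i) := by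
  rw [← Finset.Ico_add_one_right_eq_Icc, prod_Ico_eq_prod_range]
  simp

/-- Abstract per-term algebraic manipulation. -/
lemma term_alg (eta N1 N2 D1 D2 W2 C F1 F2 FS : ℂ) (s n : ℕ)
    (hsign : eta^n * (-eta)^(s-n) = (-1:ℂ)^s * (-1:ℂ)^n * eta^s)
    (hfact : C * F1 * F2 = FS)
    (hD1 : D1 ≠ 0) (hD2 : D2 ≠ 0) (hW : W2 ≠ 0) (hF1 : F1 ≠ 0) (hF2 : F2 ≠ 0) (hC : C ≠ 0) :
    (eta^n / F1 * (N1 / D1)) * ((-eta)^(s-n) / F2 * (N2 / D2))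
      = ((-1:ℂ)^s * eta^s * (N1*N2) / FS) * ((-1:ℂ)^n * C * W2 / (D1 * (W2 * D2))) := by
  rw [← hfact]
  field_simp
  linear_combination (N1*N2) * hsign

/-- The basis vector `|ℓ,k⟩` of the space of finitely supported functions `ℕ × ℕ → ℂ`. -/
noncomputable def ket (p : ℕ × ℕ) : (ℕ × ℕ) →₀ ℂ := Finsupp.single p 1

/-- The coefficient `M^{k,ℓ}_n = ((−η)^n/n!) ∏_{j=1}^n f^(1)_{ℓ+j−1} e_{k−j+1} / g(k−ℓ−j)`,
where `e_m = m`, `f^(1)_m = 2λ₁ − m` and `g(x) = δ₁ − δ₂ + η(λ₁ − λ₂ + x)`. -/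
noncomputable def Mcoef (lam1 lam2 del1 del2 eta : ℂ) (k l n : ℕ) : ℂ :=
  ((-eta) ^ n / (n.factorial : ℂ)) *
    ∏ j ∈ Finset.Icc 1 n,
      (2 * lam1 - ((l : ℂ) + (j : ℂ) - 1)) * ((k : ℂ) - (j : ℂ) + 1) /
        (del1 - del2 + eta * (lam1 - lam2 + ((k : ℂ) - (l : ℂ) - (j : ℂ))))

/-- The vector `v_{ℓ,k} = Σ_{n=0}^k M^{k,ℓ}_n |ℓ+n, k−n⟩`. -/
noncomputable def vD (lam1 lam2 del1 del2 eta : ℂ) (l k : ℕ) : (ℕ × ℕ) →₀ ℂ :=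
  ∑ n ∈ Finset.range (k + 1), Mcoef lam1 lam2 del1 del2 eta k l n • ket (l + n, k - n)

/-- The coefficient cancellation identity. -/
lemma coef_cancel (lam1 lam2 del1 del2 eta : ℂ) (heta : eta ≠ 0)
    (hg : ∀ m : ℤ, del1 - del2 + eta * (lam1 - lam2 + (m : ℂ)) ≠ 0)
    (l k s : ℕ) (hs1 : 1 ≤ s) (hsk : s ≤ k) :
    ∑ n ∈ range (s+1),
      ((eta ^ n / (n.factorial : ℂ)) *
          ∏ j ∈ Finset.Icc 1 n,
            (2 * lam1 - ((l : ℂ) + (j : ℂ) - 1)) * ((k : ℂ) - (j : ℂ) + 1) /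
              (del1 - del2 + eta * (lam1 - lam2 +
                (((k : ℂ) - (n : ℂ)) - ((l : ℂ) + (n : ℂ)) + (j : ℂ))))) *
        Mcoef lam1 lam2 del1 del2 eta (k - n) (l + n) (s - n) = 0 := by
  set W : ℕ → ℂ := fun i => del1 - del2 + eta * (lam1 - lam2 + ((k : ℂ) - (l : ℂ) - (i : ℂ)))
    with hWdef
  have hW : ∀ i, W i ≠ 0 := by
    intro i
    have h := hg ((k : ℤ) - (l : ℤ) - (i : ℤ))
    simp only [hWdef]
    convert h using 4
    push_cast
    ring
  have haff : ∀ i, W (i+1) = W i - eta := by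
    intro i
    simp only [hWdef]
    push_cast
    ring
  set A : ℕ → ℂ := fun j => (2 * lam1 - ((l : ℂ) + (j : ℂ) - 1)) * ((k : ℂ) - (j : ℂ) + 1)
    with hAdef
  have key := key_telescope eta W hW haff s hs1
  have hterm : ∀ n ∈ range (s+1),
      ((eta ^ n / (n.factorial : ℂ)) *
          ∏ j ∈ Finset.Icc 1 n,
            (2 * lam1 - ((l : ℂ) + (j : ℂ) - 1)) * ((k : ℂ) - (j : ℂ) + 1) /
              (del1 - del2 + eta * (lam1 - lam2 +
                (((k : ℂ) - (n : ℂ)) - ((l : ℂ) + (n : ℂ)) + (j : ℂ))))) *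
        Mcoef lam1 lam2 del1 del2 eta (k - n) (l + n) (s - n)
      = (((-1 : ℂ))^s * eta^s * (∏ i ∈ range s, A (1+i)) / (s.factorial : ℂ)) *
          (((-1 : ℂ))^n * (s.choose n : ℂ) * W (2*n) / ∏ i ∈ range (s+1), W (n+i)) := by
    intro n hn
    rw [mem_range] at hn
    have hn' : n ≤ s := by omega
    have hnk : n ≤ k := le_trans hn' hsk
    have hprod1 : (∏ j ∈ Finset.Icc 1 n,
        (2 * lam1 - ((l : ℂ) + (j : ℂ) - 1)) * ((k : ℂ) - (j : ℂ) + 1) /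
          (del1 - del2 + eta * (lam1 - lam2 +
            (((k : ℂ) - (n : ℂ)) - ((l : ℂ) + (n : ℂ)) + (j : ℂ)))))
        = (∏ i ∈ range n, A (1+i)) / ∏ i ∈ range n, W (n+i) := by
      rw [prodIcc, prod_div_distrib]
      congr 1
      rw [← prod_range_reflect (fun i => W (n+i)) n]
      apply prod_congr rfl
      intro i hi
      rw [mem_range] at hi
      simp only [hWdef]
      have h1 : n + (n - 1 - i) = 2*n - (1+i) := by omega
      rw [h1]
      have h2 : ((2*n - (1+i) : ℕ) : ℂ) = 2*(n:ℂ) - (1+(i:ℂ)) := by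
        push_cast [Nat.cast_sub (show 1+i ≤ 2*n by omega)]
        ring
      rw [h2]
      push_cast
      ring_nf
    have hprod2 : (∏ j ∈ Finset.Icc 1 (s-n),
        (2 * lam1 - (((l+n : ℕ) : ℂ) + (j : ℂ) - 1)) * (((k-n : ℕ) : ℂ) - (j : ℂ) + 1) /
          (del1 - del2 + eta * (lam1 - lam2 + (((k-n : ℕ) : ℂ) - ((l+n : ℕ) : ℂ) - (j : ℂ)))))
        = (∏ i ∈ range (s-n), A (n+1+i)) / ∏ i ∈ range (s-n), W (2*n+1+i) := by
      rw [prodIcc, prod_div_distrib]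
      congr 1
      · apply prod_congr rfl
        intro i _
        simp only [hAdef]
        push_cast [Nat.cast_sub hnk]
        ring
      apply prod_congr rfl
      intro i _
      simp only [hWdef]
      push_cast [Nat.cast_sub hnk]
      ring
    have hnum : (∏ i ∈ range n, A (1+i)) * (∏ i ∈ range (s-n), A (n+1+i))
        = ∏ i ∈ range s, A (1+i) := by
      conv_rhs => rw [show s = n + (s-n) by omega]
      rw [prod_range_add]
      congr 1
      apply prod_congr rfl
      intro i _
      congr 1
      omega
    have hden : ∏ i ∈ range (s+1), W (n+i)
        = (∏ i ∈ range n, W (n+i)) * (W (2*n) * ∏ i ∈ range (s-n), W (2*n+1+i)) := by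
      conv_lhs => rw [show s+1 = n + ((s-n)+1) by omega]
      rw [prod_range_add]
      congr 1
      rw [prod_range_succ', mul_comm]
      congr 1
      · congr 1
        omega
      · apply prod_congr rfl
        intro i _
        congr 1
        omega
    have hsign : eta^n * (-eta)^(s-n) = (-1 : ℂ)^s * (-1 : ℂ)^n * eta^s := by
      rw [neg_pow]
      have h1 : ((-1 : ℂ))^(s-n) * (-1 : ℂ)^n = (-1 : ℂ)^s := by
        rw [← pow_add]; congr 1; omega
      have h2 : ((-1 : ℂ))^n * (-1 : ℂ)^n = 1 := by
        rw [← mul_pow]; norm_num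
      have h3 : ((-1:ℂ))^s * (-1:ℂ)^n = (-1:ℂ)^(s-n) := by
        rw [← h1, mul_assoc, h2, mul_one]
      have h4 : eta^n * eta^(s-n) = eta^s := by
        rw [← pow_add]; congr 1; omega
      rw [← h3]
      linear_combination ((-1:ℂ)^s * (-1:ℂ)^n) * h4
    have hfact : (s.choose n : ℂ) * (n.factorial : ℂ) * ((s-n).factorial : ℂ)
        = (s.factorial : ℂ) := by
      exact_mod_cast congrArg (Nat.cast : ℕ → ℂ) (Nat.choose_mul_factorial_mul_factorial hn')
    have hCne : (s.choose n : ℂ) ≠ 0 := Nat.cast_ne_zero.mpr (Nat.choose_pos hn').ne'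
    have hne1 : (n.factorial : ℂ) ≠ 0 := Nat.cast_ne_zero.mpr n.factorial_ne_zero
    have hne2 : ((s-n).factorial : ℂ) ≠ 0 := Nat.cast_ne_zero.mpr (s-n).factorial_ne_zero
    have hne4 : (∏ i ∈ range n, W (n+i)) ≠ 0 := prod_ne_zero_iff.mpr fun i _ => hW _
    have hne5 : (∏ i ∈ range (s-n), W (2*n+1+i)) ≠ 0 := prod_ne_zero_iff.mpr fun i _ => hW _
    have hne6 : W (2*n) ≠ 0 := hW _
    simp only [Mcoef]
    rw [hprod1, hprod2, hden, ← hnum]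
    exact term_alg eta _ _ _ _ _ _ _ _ _ s n hsign hfact hne4 hne5 hne6 hne1 hne2 hCne
  rw [sum_congr rfl hterm, ← mul_sum, key, mul_zero]

/-- inverse change of basis:
`|ℓ,k⟩ = Σ_{n=0}^k (η^n/n!) ∏_{j=1}^n [f^(1)_{ℓ+j−1} e_{k−j+1} / g((k−n)−(ℓ+n)+j)] v_{ℓ+n,k−n}`. -/
theorem ket_eq_sum_vD (lam1 lam2 del1 del2 eta : ℂ) (heta : eta ≠ 0)
    (hg : ∀ m : ℤ, del1 - del2 + eta * (lam1 - lam2 + (m : ℂ)) ≠ 0) (l k : ℕ) :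
    ket (l, k) =
      ∑ n ∈ Finset.range (k + 1),
        ((eta ^ n / (n.factorial : ℂ)) *
            ∏ j ∈ Finset.Icc 1 n,
              (2 * lam1 - ((l : ℂ) + (j : ℂ) - 1)) * ((k : ℂ) - (j : ℂ) + 1) /
                (del1 - del2 + eta * (lam1 - lam2 +
                  (((k : ℂ) - (n : ℂ)) - ((l : ℂ) + (n : ℂ)) + (j : ℂ))))) •
          vD lam1 lam2 del1 del2 eta (l + n) (k - n) := by
  symm
  have hrw : ∀ n ∈ range (k+1),
      ((eta ^ n / (n.factorial : ℂ)) *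
          ∏ j ∈ Finset.Icc 1 n,
            (2 * lam1 - ((l : ℂ) + (j : ℂ) - 1)) * ((k : ℂ) - (j : ℂ) + 1) /
              (del1 - del2 + eta * (lam1 - lam2 +
                (((k : ℂ) - (n : ℂ)) - ((l : ℂ) + (n : ℂ)) + (j : ℂ))))) •
        vD lam1 lam2 del1 del2 eta (l + n) (k - n)
      = ∑ m ∈ range (k - n + 1),
          (((eta ^ n / (n.factorial : ℂ)) *
            ∏ j ∈ Finset.Icc 1 n,
              (2 * lam1 - ((l : ℂ) + (j : ℂ) - 1)) * ((k : ℂ) - (j : ℂ) + 1) /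
                (del1 - del2 + eta * (lam1 - lam2 +
                  (((k : ℂ) - (n : ℂ)) - ((l : ℂ) + (n : ℂ)) + (j : ℂ))))) *
            Mcoef lam1 lam2 del1 del2 eta (k - n) (l + n) m) • ket (l + n + m, k - n - m) := by
    intro n _
    rw [vD, smul_sum]
    apply sum_congr rfl
    intro m _
    rw [smul_smul]
  rw [sum_congr rfl hrw,
    sum_triangle k (fun n m =>
      (((eta ^ n / (n.factorial : ℂ)) *
          ∏ j ∈ Finset.Icc 1 n,
            (2 * lam1 - ((l : ℂ) + (j : ℂ) - 1)) * ((k : ℂ) - (j : ℂ) + 1) /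
              (del1 - del2 + eta * (lam1 - lam2 +
                (((k : ℂ) - (n : ℂ)) - ((l : ℂ) + (n : ℂ)) + (j : ℂ))))) *
        Mcoef lam1 lam2 del1 del2 eta (k - n) (l + n) m) • ket (l + n + m, k - n - m))]
  have hket : ∀ s ∈ range (k+1), ∀ n ∈ range (s+1),
      ket (l + n + (s - n), k - n - (s - n)) = ket (l + s, k - s) := by
    intro s hs n hn
    rw [mem_range] at hs hn
    congr 1
    simp only [Prod.mk.injEq]
    omega
  have hstep : ∀ s ∈ range (k+1),
      (∑ n ∈ range (s+1),
        (((eta ^ n / (n.factorial : ℂ)) *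
            ∏ j ∈ Finset.Icc 1 n,
              (2 * lam1 - ((l : ℂ) + (j : ℂ) - 1)) * ((k : ℂ) - (j : ℂ) + 1) /
                (del1 - del2 + eta * (lam1 - lam2 +
                  (((k : ℂ) - (n : ℂ)) - ((l : ℂ) + (n : ℂ)) + (j : ℂ))))) *
          Mcoef lam1 lam2 del1 del2 eta (k - n) (l + n) (s - n)) • ket (l + n + (s - n), k - n - (s - n)))
      = (∑ n ∈ range (s+1),
          ((eta ^ n / (n.factorial : ℂ)) *
            ∏ j ∈ Finset.Icc 1 n,
              (2 * lam1 - ((l : ℂ) + (j : ℂ) - 1)) * ((k : ℂ) - (j : ℂ) + 1) /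
                (del1 - del2 + eta * (lam1 - lam2 +
                  (((k : ℂ) - (n : ℂ)) - ((l : ℂ) + (n : ℂ)) + (j : ℂ))))) *
            Mcoef lam1 lam2 del1 del2 eta (k - n) (l + n) (s - n)) • ket (l + s, k - s) := by
    intro s hs
    rw [sum_smul]
    apply sum_congr rfl
    intro n hn
    rw [hket s hs n hn]
  rw [sum_congr rfl hstep]
  rw [Finset.sum_eq_single_of_mem 0 (mem_range.mpr (by omega))]
  · simp [Mcoef, ket]
  · intro s hs hs0
    rw [mem_range] at hs
    rw [coef_cancel lam1 lam2 del1 del2 eta heta hg l k s (by omega) (by omega), zero_smul]
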